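/- Let n ≥ 1 and let x⃗ = (x₁, …, xₙ) ∈ ℝⁿ be a nonincreasing vector such that x₁ = x₂ = ⋯ = x_m > x_{m+1} ≥ ⋯ ≥ xₙ for some 1 ≤ m < n. Then for every α > 0 and every index 1 ≤ i ≤ m, |Softmax(α x⃗)_i − 1/m| ≤ ((n − m)/m²) · e^{−α(x₁ − x_{m+1})}. -/

import Mathlib

/-- The softmax function: `Softmax(v)_j = e^{v j} / ∑ i, e^{v i}`. -/
noncomputable def softmax {n : ℕ} (v : Fin n → ℝ) (j : Fin n) : ℝ :=
  Real.exp (v j) / ∑ i, Real.exp (v i)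

theorem softmax_max_indices_error_bound {n : ℕ} (hn : 1 ≤ n) (x : Fin n → ℝ)
    (hanti : ∀ i j : Fin n, i ≤ j → x j ≤ x i)
    (m : ℕ) (hm1 : 1 ≤ m) (hmn : m < n)
    (hconst : ∀ i : Fin n, (i : ℕ) < m → x i = x ⟨0, by omega⟩)
    (hgap : x ⟨m, hmn⟩ < x ⟨0, by omega⟩)
    (α : ℝ) (hα : 0 < α) (i : Fin n) (hi : (i : ℕ) < m) :
    |softmax (fun j => α * x j) i - 1 / m| ≤
      (((n : ℝ) - m) / m ^ 2) * Real.exp (-α * (x ⟨0, by omega⟩ - x ⟨m, hmn⟩)) := by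
  classical
  set x0 := x ⟨0, by omega⟩ with hx0
  set xm := x ⟨m, hmn⟩ with hxm
  set A := Real.exp (α * x0) with hA
  set S := ∑ j, Real.exp (α * x j) with hS
  have hApos : 0 < A := Real.exp_pos _
  have hSpos : 0 < S := Finset.sum_pos (fun j _ => Real.exp_pos _) ⟨i, Finset.mem_univ i⟩
  set F := Finset.univ.filter (fun j : Fin n => (j : ℕ) < m) with hF
  set G := Finset.univ.filter (fun j : Fin n => ¬ (j : ℕ) < m) with hG
  have hcardF : F.card = m := by
    have : F = (Finset.univ : Finset (Fin m)).map ⟨Fin.castLE hmn.le, Fin.castLE_injective _⟩ := by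
      ext j
      simp only [hF, Finset.mem_filter, Finset.mem_univ, true_and, Finset.mem_map,
        Function.Embedding.coeFn_mk]
      constructor
      · intro hj; exact ⟨⟨j, hj⟩, Fin.ext rfl⟩
      · rintro ⟨k, -, rfl⟩; simpa using k.2
    rw [this, Finset.card_map, Finset.card_univ, Fintype.card_fin]
  have hcardG : G.card = n - m := by
    have : F.card + G.card = n := by
      rw [hF, hG, Finset.card_filter_add_card_filter_not, Finset.card_univ,
        Fintype.card_fin]
    omega
  have hsumF : ∑ j ∈ F, Real.exp (α * x j) = m * A := by
    rw [Finset.sum_congr rfl (fun j hj => by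
      rw [hconst j (by simpa [hF] using hj)]), Finset.sum_const, hcardF, nsmul_eq_mul]
  have hsumG : ∑ j ∈ G, Real.exp (α * x j) ≤ ((n : ℝ) - m) * Real.exp (α * xm) := by
    have : ∀ j ∈ G, Real.exp (α * x j) ≤ Real.exp (α * xm) := by
      intro j hj
      have hjm : m ≤ (j : ℕ) := by simpa [hG] using hj
      exact Real.exp_le_exp.2 (mul_le_mul_of_nonneg_left
        (hanti ⟨m, hmn⟩ j (by simpa [Fin.le_def] using hjm)) hα.le)
    calc ∑ j ∈ G, Real.exp (α * x j) ≤ G.card * Real.exp (α * xm) := by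
          simpa using Finset.sum_le_card_nsmul G _ _ this
      _ = ((n : ℝ) - m) * Real.exp (α * xm) := by
          rw [hcardG]; push_cast [Nat.cast_sub hmn.le]; ring
  have hsumGnn : 0 ≤ ∑ j ∈ G, Real.exp (α * x j) :=
    Finset.sum_nonneg fun j _ => (Real.exp_pos _).le
  set T := ∑ j ∈ G, Real.exp (α * x j) with hT
  have hSsplit : S = m * A + T := by
    rw [hS, ← Finset.sum_filter_add_sum_filter_not Finset.univ (fun j : Fin n => (j : ℕ) < m),
      ← hF, ← hG, hsumF]
  have hmpos : (0 : ℝ) < m := by positivity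
  have hsm : softmax (fun j => α * x j) i = A / S := by
    rw [softmax, hconst i hi]
  have hSlb : m * A ≤ S := by rw [hSsplit]; linarith
  have habs : |softmax (fun j => α * x j) i - 1 / m| = T / (m * S) := by
    rw [hsm]
    have : A / S - 1 / m = -(T / (m * S)) := by
      field_simp
      rw [hSsplit]; ring
    rw [this, abs_neg, abs_of_nonneg (by positivity)]
  rw [habs]
  have h1 : T / (m * S) ≤ T / (m * (m * A)) := by
    apply div_le_div_of_nonneg_left hsumGnn (by positivity)
    exact mul_le_mul_of_nonneg_left hSlb hmpos.le
  have h2 : T / (m * (m * A)) ≤ (((n : ℝ) - m) * Real.exp (α * xm)) / (m * (m * A)) := by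
    gcongr
  refine (h1.trans h2).trans_eq ?_
  have hexp : Real.exp (-α * (x0 - xm)) = Real.exp (α * xm) / A := by
    rw [hA, ← Real.exp_sub]; congr 1; ring
  rw [hexp]
  field_simp
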